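/- Let Γ be a locally semicomplete commutative weakly distance-regular digraph with (1,1) ∈ ∂̃(Γ). Suppose there are no vertices x,y,z with ∂̃(x,y)=∂̃(y,z)=(1,1) and ∂̃(x,z)=(1,2) (i.e. Γ_{1,2} ∉ Γ_{1,1}²). Then the relation 'x = z or ∂̃(x,z)=(1,1)' is an equivalence relation on the vertices of Γ, each of whose classes has exactly k_{1,1}+1 vertices, and any two distinct vertices in the same class are at two-way distance (1,1); in other words, the subdigraph Δ_2 is isomorphic to the complete graph on k_{1,1}+1 vertices. -/
import Mathlib


variable {V : Type*}

/-- There is a directed walk of length `n` from `x` to `y` in the digraph with arc relation `A`. -/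
def HasWalk (A : V → V → Prop) : ℕ → V → V → Prop
  | 0, x, y => x = y
  | n + 1, x, y => ∃ z, A x z ∧ HasWalk A n z y

/-- The distance `∂(x,y)`: the length of a shortest directed path from `x` to `y`. -/
noncomputable def ddist (A : V → V → Prop) (x y : V) : ℕ :=
  sInf {n : ℕ | HasWalk A n x y}

/-- The two-way distance `∂̃(x,y) = (∂(x,y), ∂(y,x))`. -/
noncomputable def tdist (A : V → V → Prop) (x y : V) : ℕ × ℕ :=
  (ddist A x y, ddist A y x)

/-- The two-way distance set `∂̃(Γ)`. -/
def tset (A : V → V → Prop) : Set (ℕ × ℕ) :=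
  {d : ℕ × ℕ | ∃ x y : V, tdist A x y = d}

/-- A (finite) weakly distance-regular digraph: a loopless strongly connected digraph
together with its intersection numbers `p h i j = p^{h}_{i,j}`, where
`p h i j = 0` by convention whenever one of `h`, `i`, `j` is not a two-way distance. -/
structure WDRDigraph (V : Type*) [Fintype V] where
  Adj : V → V → Prop
  loopless : ∀ v : V, ¬ Adj v v
  strongly_connected : ∀ x y : V, ∃ n : ℕ, HasWalk Adj n x y
  p : ℕ × ℕ → ℕ × ℕ → ℕ × ℕ → ℕ
  card_inter : ∀ (i j : ℕ × ℕ) (x y : V),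
    {z : V | tdist Adj x z = i ∧ tdist Adj z y = j}.ncard = p (tdist Adj x y) i j
  p_not_in : ∀ h i j : ℕ × ℕ,
    h ∉ tset Adj ∨ i ∉ tset Adj ∨ j ∉ tset Adj → p h i j = 0

variable [Fintype V]

/-- A weakly distance-regular digraph is commutative if `p^{h}_{i,j} = p^{h}_{j,i}`
for all two-way distances `h`, `i`, `j`. -/
def WDRDigraph.Commutative (G : WDRDigraph V) : Prop :=
  ∀ h i j : ℕ × ℕ, h ∈ tset G.Adj → i ∈ tset G.Adj → j ∈ tset G.Adj →
    G.p h i j = G.p h j i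

/-- A digraph is semicomplete if any two distinct vertices are joined by at least one arc. -/
def Semicomplete (A : V → V → Prop) : Prop :=
  ∀ x y : V, x ≠ y → A x y ∨ A y x

/-- A digraph is locally semicomplete if the out-neighbourhood and the in-neighbourhood of
every vertex induce semicomplete digraphs. -/
def LocallySemicomplete (A : V → V → Prop) : Prop :=
  ∀ x y z : V, y ≠ z →
    ((A x y → A x z → (A y z ∨ A z y)) ∧ (A y x → A z x → (A y z ∨ A z y)))

/-- A circuit of length `q`, encoded as a function `ZMod q → V` each of whose
consecutive pairs (cyclically) is an arc. -/
def IsCircuit (A : V → V → Prop) (q : ℕ) (c : ZMod q → V) : Prop :=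
  ∀ i : ZMod q, A (c i) (c (i + 1))

/-- The arc `(x, y)` (of type `(1, q-1)`) is pure: every circuit of length `q`
containing it consists of arcs of type `(1, q-1)`. -/
def PureArc (A : V → V → Prop) (q : ℕ) (x y : V) : Prop :=
  ∀ c : ZMod q → V, IsCircuit A q c → c 0 = x → c 1 = y →
    ∀ i : ZMod q, tdist A (c i) (c (i + 1)) = (1, q - 1)

/-- `(1, q-1)` is pure: every arc of type `(1, q-1)` is pure. -/
def TypePure (A : V → V → Prop) (q : ℕ) : Prop :=
  ∀ x y : V, tdist A x y = (1, q - 1) → PureArc A q x y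

/-- `(1, q-1)` is mixed: some arc of type `(1, q-1)` is not pure. -/
def TypeMixed (A : V → V → Prop) (q : ℕ) : Prop :=
  ∃ x y : V, tdist A x y = (1, q - 1) ∧ ¬ PureArc A q x y

/-- The number `k_i` of vertices at two-way distance `i` from `x`
(independent of `x` in a weakly distance-regular digraph). -/
noncomputable def kval (A : V → V → Prop) (i : ℕ × ℕ) (x : V) : ℕ :=
  {y : V | tdist A x y = i}.ncard

lemma ddist_eq_one_iff {A : V → V → Prop} (hl : ∀ v, ¬ A v v) {x y : V} :
    ddist A x y = 1 ↔ A x y := by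
  constructor
  · intro h
    unfold ddist at h
    have hne : {n : ℕ | HasWalk A n x y}.Nonempty := by
      by_contra hc
      rw [Set.not_nonempty_iff_eq_empty] at hc
      simp [hc] at h
    have hmem := Nat.sInf_mem hne
    rw [h] at hmem
    obtain ⟨z, haz, hz⟩ := hmem
    cases hz
    exact haz
  · intro h
    have h1 : (1 : ℕ) ∈ {n : ℕ | HasWalk A n x y} := ⟨y, h, rfl⟩
    have hle : sInf {n : ℕ | HasWalk A n x y} ≤ 1 := Nat.sInf_le h1
    have hne0 : sInf {n : ℕ | HasWalk A n x y} ≠ 0 := by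
      intro h0
      have := Nat.sInf_mem ⟨1, h1⟩
      rw [h0] at this
      have : x = y := this
      subst this
      exact hl x h
    unfold ddist
    omega

lemma ddist_eq_two {A : V → V → Prop} {x y z : V} (hl : ∀ v, ¬ A v v)
    (h1 : A x y) (h2 : A y z) (hne : x ≠ z) (hnadj : ¬ A x z) :
    ddist A x z = 2 := by
  have h2mem : (2 : ℕ) ∈ {n : ℕ | HasWalk A n x z} := ⟨y, h1, z, h2, rfl⟩
  have hle : sInf {n : ℕ | HasWalk A n x z} ≤ 2 := Nat.sInf_le h2mem
  have hmem := Nat.sInf_mem ⟨2, h2mem⟩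
  unfold ddist
  set n := sInf {n : ℕ | HasWalk A n x z} with hn
  interval_cases n
  · exact absurd hmem hne
  · obtain ⟨w, haw, hw⟩ := hmem
    cases hw
    exact absurd haw hnadj
  · rfl

lemma tdist_eq_one_one_iff {A : V → V → Prop} (hl : ∀ v, ¬ A v v) {x y : V} :
    tdist A x y = (1, 1) ↔ A x y ∧ A y x := by
  rw [tdist, Prod.mk.injEq, ddist_eq_one_iff hl, ddist_eq_one_iff hl]

/-- in a locally semicomplete commutative weakly distance-regular digraph with
`(1,1) ∈ ∂̃(Γ)` and `Γ_{1,2} ∉ Γ_{1,1}²`, the relation `x = z ∨ ∂̃(x,z) = (1,1)` is an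
equivalence relation with classes of size `k_{1,1} + 1`, and any two distinct vertices in a
common class are at two-way distance `(1,1)`. -/
theorem statement1 [Nonempty V] (G : WDRDigraph V)
    (hls : LocallySemicomplete G.Adj) (hcomm : G.Commutative)
    (h11 : ((1, 1) : ℕ × ℕ) ∈ tset G.Adj)
    (hno : ¬ ∃ x y z : V, tdist G.Adj x y = (1, 1) ∧ tdist G.Adj y z = (1, 1) ∧
        tdist G.Adj x z = (1, 2)) :
    Equivalence (fun x z : V => x = z ∨ tdist G.Adj x z = (1, 1)) ∧
    (∀ x : V, {z : V | x = z ∨ tdist G.Adj x z = (1, 1)}.ncard = kval G.Adj (1, 1) x + 1) ∧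
    (∀ x y z : V, (x = y ∨ tdist G.Adj x y = (1, 1)) → (x = z ∨ tdist G.Adj x z = (1, 1)) →
      y ≠ z → tdist G.Adj y z = (1, 1)) := by
  have hl := G.loopless
  -- key transitivity step
  have key : ∀ x y z : V, tdist G.Adj x y = (1, 1) → tdist G.Adj y z = (1, 1) →
      x ≠ z → tdist G.Adj x z = (1, 1) := by
    intro x y z hxy hyz hne
    rw [tdist_eq_one_one_iff hl] at hxy hyz ⊢
    obtain ⟨hxy1, hyx⟩ := hxy
    obtain ⟨hyz1, hzy⟩ := hyz
    rcases ((hls y x z hne).1 hyx hyz1) with hxz | hzx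
    · refine ⟨hxz, ?_⟩
      by_contra hzx
      exact hno ⟨x, y, z, (tdist_eq_one_one_iff hl).2 ⟨hxy1, hyx⟩,
        (tdist_eq_one_one_iff hl).2 ⟨hyz1, hzy⟩,
        by rw [tdist, Prod.mk.injEq, ddist_eq_one_iff hl]
           exact ⟨hxz, ddist_eq_two hl hzy hyx (Ne.symm hne) hzx⟩⟩
    · refine ⟨?_, hzx⟩
      by_contra hxz
      exact hno ⟨z, y, x, (tdist_eq_one_one_iff hl).2 ⟨hzy, hyz1⟩,
        (tdist_eq_one_one_iff hl).2 ⟨hyx, hxy1⟩,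
        by rw [tdist, Prod.mk.injEq, ddist_eq_one_iff hl]
           exact ⟨hzx, ddist_eq_two hl hxy1 hyz1 hne hxz⟩⟩
  have hsymm : ∀ {x z : V}, (x = z ∨ tdist G.Adj x z = (1, 1)) →
      (z = x ∨ tdist G.Adj z x = (1, 1)) := by
    rintro x z (rfl | h)
    · exact Or.inl rfl
    · rw [tdist_eq_one_one_iff hl] at h
      exact Or.inr ((tdist_eq_one_one_iff hl).2 ⟨h.2, h.1⟩)
  have htrans : ∀ {x y z : V}, (x = y ∨ tdist G.Adj x y = (1, 1)) →
      (y = z ∨ tdist G.Adj y z = (1, 1)) → (x = z ∨ tdist G.Adj x z = (1, 1)) := by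
    rintro x y z (rfl | h1) h2
    · exact h2
    · rcases h2 with rfl | h2
      · exact Or.inr h1
      · rcases eq_or_ne x z with rfl | hne
        · exact Or.inl rfl
        · exact Or.inr (key x y z h1 h2 hne)
  refine ⟨⟨fun x => Or.inl rfl, hsymm, htrans⟩, ?_, ?_⟩
  · intro x
    have hxs : x ∉ {z : V | tdist G.Adj x z = (1, 1)} := by
      intro h
      rw [Set.mem_setOf_eq, tdist_eq_one_one_iff hl] at h
      exact hl x h.1
    have : {z : V | x = z ∨ tdist G.Adj x z = (1, 1)} =
        insert x {z : V | tdist G.Adj x z = (1, 1)} := by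
      ext z
      simp [eq_comm, or_comm]
    rw [this, Set.ncard_insert_of_notMem hxs (Set.toFinite _), kval]
  · intro x y z hxy hxz hne
    rcases htrans (hsymm hxy) hxz with rfl | h
    · exact absurd rfl hne
    · exact h
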